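/- Let k be a field and H a k-bialgebra with comultiplication Δ(h) = Σ h₍₁₎⊗h₍₂₎. Then the k-linear map R : H⊗H → H⊗H defined by R(g⊗h) = Σ h₍₁₎g ⊗ h₍₂₎ is a solution of the Hopf equation (R¹²R²³ = R²³R¹³R¹²). -/
import Mathlib


open TensorProduct LinearMap

section HopfEq

variable (k V : Type*) [Field k] [AddCommGroup V] [Module k V]

/-- The flip map `τ : V ⊗ V → V ⊗ V`, `τ(v ⊗ w) = w ⊗ v`. -/
noncomputable def flipMap : V ⊗[k] V →ₗ[k] V ⊗[k] V :=
  (TensorProduct.comm k V V).toLinearMap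

variable {k V}

/-- `R¹² = R ⊗ I` as an endomorphism of `V ⊗ V ⊗ V`. -/
noncomputable def map12 (R : V ⊗[k] V →ₗ[k] V ⊗[k] V) :
    V ⊗[k] (V ⊗[k] V) →ₗ[k] V ⊗[k] (V ⊗[k] V) :=
  (TensorProduct.assoc k V V V).toLinearMap ∘ₗ R.rTensor V ∘ₗ
    (TensorProduct.assoc k V V V).symm.toLinearMap

/-- `R²³ = I ⊗ R` as an endomorphism of `V ⊗ V ⊗ V`. -/
noncomputable def map23 (R : V ⊗[k] V →ₗ[k] V ⊗[k] V) :
    V ⊗[k] (V ⊗[k] V) →ₗ[k] V ⊗[k] (V ⊗[k] V) :=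
  R.lTensor V

/-- `R¹³ = (I ⊗ τ)(R ⊗ I)(I ⊗ τ)` as an endomorphism of `V ⊗ V ⊗ V`. -/
noncomputable def map13 (R : V ⊗[k] V →ₗ[k] V ⊗[k] V) :
    V ⊗[k] (V ⊗[k] V) →ₗ[k] V ⊗[k] (V ⊗[k] V) :=
  (flipMap k V).lTensor V ∘ₗ map12 R ∘ₗ (flipMap k V).lTensor V

/-- `R` is a solution of the Hopf equation: `R¹²R²³ = R²³R¹³R¹²`. -/
def IsHopfSolution (R : V ⊗[k] V →ₗ[k] V ⊗[k] V) : Prop :=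
  map12 R ∘ₗ map23 R = map23 R ∘ₗ map13 R ∘ₗ map12 R

/-- `R` is a solution of the pentagonal equation: `R¹²R¹³R²³ = R²³R¹²`. -/
def IsPentagonSolution (R : V ⊗[k] V →ₗ[k] V ⊗[k] V) : Prop :=
  map12 R ∘ₗ map13 R ∘ₗ map23 R = map23 R ∘ₗ map12 R

end HopfEq

variable (k H : Type*) [Field k] [Ring H] [Bialgebra k H]

/-- Takesaki's operator `R : H ⊗ H → H ⊗ H`, `R(g ⊗ h) = Σ h₍₁₎g ⊗ h₍₂₎`. -/
noncomputable def takesakiMap : H ⊗[k] H →ₗ[k] H ⊗[k] H :=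
  LinearMap.rTensor H (LinearMap.mul' k H ∘ₗ (TensorProduct.comm k H H).toLinearMap) ∘ₗ
    (TensorProduct.assoc k H H H).symm.toLinearMap ∘ₗ
    LinearMap.lTensor H (Coalgebra.comul (R := k))

set_option synthInstance.maxHeartbeats 400000
set_option maxHeartbeats 1600000

section Aux

variable {k H}

private noncomputable def hopfNu : H ⊗[k] H →ₗ[k] H :=
  LinearMap.mul' k H ∘ₗ (TensorProduct.comm k H H).toLinearMap

@[simp] private lemma hopfNu_tmul (a b : H) : hopfNu (a ⊗ₜ[k] b) = b * a := rfl

/-- The gadget `Φ g ((u⊗v) ⊗ (a⊗(p⊗c))) = (a*u*g) ⊗ ((p*v) ⊗ c)`. -/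
private noncomputable def hopfPhi (g : H) :
    (H ⊗[k] H) ⊗[k] (H ⊗[k] (H ⊗[k] H)) →ₗ[k] H ⊗[k] (H ⊗[k] H) :=
  (TensorProduct.assoc k H H H).toLinearMap ∘ₗ
    LinearMap.rTensor H (TensorProduct.map (LinearMap.mulRight k g ∘ₗ hopfNu) hopfNu) ∘ₗ
    LinearMap.rTensor H (TensorProduct.tensorTensorTensorComm k H H H H).toLinearMap ∘ₗ
    (TensorProduct.assoc k (H ⊗[k] H) (H ⊗[k] H) H).symm.toLinearMap ∘ₗ
    LinearMap.lTensor (H ⊗[k] H) (TensorProduct.assoc k H H H).symm.toLinearMap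

@[simp] private lemma hopfPhi_tmul (g u v a p c : H) :
    hopfPhi g ((u ⊗ₜ[k] v) ⊗ₜ[k] (a ⊗ₜ[k] (p ⊗ₜ[k] c)))
      = (a * u * g) ⊗ₜ[k] ((p * v) ⊗ₜ[k] c) := by
  simp [hopfPhi]

private lemma takesaki_tmul (g h : H) :
    takesakiMap k H (g ⊗ₜ[k] h)
      = LinearMap.rTensor H (LinearMap.mulRight k g) (Coalgebra.comul (R := k) h) := by
  have key : ∀ x : H ⊗[k] H,
      LinearMap.rTensor H (LinearMap.mul' k H ∘ₗ (TensorProduct.comm k H H).toLinearMap)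
        ((TensorProduct.assoc k H H H).symm (g ⊗ₜ[k] x))
      = LinearMap.rTensor H (LinearMap.mulRight k g) x := by
    intro x
    induction x using TensorProduct.induction_on with
    | zero => simp
    | tmul a b => simp
    | add x y hx hy => simp [tmul_add, hx, hy]
  simpa [takesakiMap] using key (Coalgebra.comul h)

private lemma map12_takesaki (g p c : H) :
    map12 (takesakiMap k H) (g ⊗ₜ[k] (p ⊗ₜ[k] c))
      = TensorProduct.assoc k H H H
          ((LinearMap.rTensor H (LinearMap.mulRight k g) (Coalgebra.comul (R := k) p)) ⊗ₜ[k] c) := by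
  simp [map12, takesaki_tmul]

private lemma map23_takesaki (g h l : H) :
    map23 (takesakiMap k H) (g ⊗ₜ[k] (h ⊗ₜ[k] l))
      = g ⊗ₜ[k] (LinearMap.rTensor H (LinearMap.mulRight k h) (Coalgebra.comul (R := k) l)) := by
  simp [map23, takesaki_tmul]

private lemma hopfPhi_key (g : H) (x y : H ⊗[k] H) (b : H) :
    TensorProduct.assoc k H H H ((LinearMap.rTensor H (LinearMap.mulRight k g) (x * y)) ⊗ₜ[k] b)
      = hopfPhi g (y ⊗ₜ[k] (TensorProduct.assoc k H H H (x ⊗ₜ[k] b))) := by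
  induction x using TensorProduct.induction_on with
  | zero => simp
  | add x₁ x₂ h1 h2 => simp only [add_mul, map_add, add_tmul, tmul_add, h1, h2]
  | tmul a₁ a₂ =>
    induction y using TensorProduct.induction_on with
    | zero => simp
    | add y₁ y₂ h1 h2 => simp only [mul_add, map_add, add_tmul, tmul_add, h1, h2]
    | tmul u v =>
      simp [Algebra.TensorProduct.tmul_mul_tmul, mul_assoc]

private lemma hopfPhi_sub (g u v a : H) (w : H ⊗[k] H) :
    hopfPhi g ((u ⊗ₜ[k] v) ⊗ₜ[k] (a ⊗ₜ[k] w))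
      = (a * u * g) ⊗ₜ[k] (LinearMap.rTensor H (LinearMap.mulRight k v) w) := by
  induction w using TensorProduct.induction_on with
  | zero => simp
  | add w₁ w₂ h1 h2 => simp only [map_add, tmul_add, h1, h2]
  | tmul p c => simp

end Aux

section Aux2

variable {k H}

private lemma hopf_lhs (g h l : H) :
    map12 (takesakiMap k H) (map23 (takesakiMap k H) (g ⊗ₜ[k] (h ⊗ₜ[k] l)))
      = hopfPhi g ((Coalgebra.comul (R := k) h) ⊗ₜ[k]
          (TensorProduct.assoc k H H H
            (LinearMap.rTensor H (Coalgebra.comul (R := k)) (Coalgebra.comul (R := k) l)))) := by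
  rw [map23_takesaki]
  have key : ∀ x : H ⊗[k] H,
      map12 (takesakiMap k H) (g ⊗ₜ[k] (LinearMap.rTensor H (LinearMap.mulRight k h) x))
        = hopfPhi g ((Coalgebra.comul (R := k) h) ⊗ₜ[k]
            (TensorProduct.assoc k H H H
              (LinearMap.rTensor H (Coalgebra.comul (R := k)) x))) := by
    intro x
    induction x using TensorProduct.induction_on with
    | zero => simp
    | add x₁ x₂ h1 h2 => simp only [map_add, tmul_add, h1, h2]
    | tmul a b =>
      rw [rTensor_tmul, rTensor_tmul, mulRight_apply, map12_takesaki,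
        Bialgebra.comul_mul, hopfPhi_key]
  exact key _

private lemma hopf_rhs (g h l : H) :
    map23 (takesakiMap k H) (map13 (takesakiMap k H)
        (map12 (takesakiMap k H) (g ⊗ₜ[k] (h ⊗ₜ[k] l))))
      = hopfPhi g ((Coalgebra.comul (R := k) h) ⊗ₜ[k]
          (LinearMap.lTensor H (Coalgebra.comul (R := k)) (Coalgebra.comul (R := k) l))) := by
  rw [map12_takesaki]
  have key : ∀ y : H ⊗[k] H,
      map23 (takesakiMap k H) (map13 (takesakiMap k H)
          (TensorProduct.assoc k H H H ((LinearMap.rTensor H (LinearMap.mulRight k g) y) ⊗ₜ[k] l)))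
        = hopfPhi g (y ⊗ₜ[k]
            (LinearMap.lTensor H (Coalgebra.comul (R := k)) (Coalgebra.comul (R := k) l))) := by
    intro y
    induction y using TensorProduct.induction_on with
    | zero => simp
    | add y₁ y₂ h1 h2 => simp only [map_add, add_tmul, tmul_add, h1, h2]
    | tmul u v =>
      rw [rTensor_tmul, mulRight_apply, TensorProduct.assoc_tmul]
      rw [show map13 (takesakiMap k H) ((u * g) ⊗ₜ[k] (v ⊗ₜ[k] l))
            = LinearMap.lTensor H (flipMap k H)
                (map12 (takesakiMap k H) ((u * g) ⊗ₜ[k] (l ⊗ₜ[k] v))) by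
        simp [map13, flipMap]]
      rw [map12_takesaki]
      have inner : ∀ x : H ⊗[k] H,
          map23 (takesakiMap k H) (LinearMap.lTensor H (flipMap k H)
              (TensorProduct.assoc k H H H
                ((LinearMap.rTensor H (LinearMap.mulRight k (u * g)) x) ⊗ₜ[k] v)))
            = hopfPhi g ((u ⊗ₜ[k] v) ⊗ₜ[k] (LinearMap.lTensor H (Coalgebra.comul (R := k)) x)) := by
        intro x
        induction x using TensorProduct.induction_on with
        | zero => simp
        | add x₁ x₂ h1 h2 => simp only [map_add, add_tmul, tmul_add, h1, h2]
        | tmul a b =>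
          rw [rTensor_tmul, mulRight_apply, TensorProduct.assoc_tmul, lTensor_tmul,
            lTensor_tmul]
          rw [show flipMap k H (b ⊗ₜ[k] v) = v ⊗ₜ[k] b from rfl]
          rw [map23_takesaki, hopfPhi_sub, mul_assoc]
      exact inner _
  exact key _

end Aux2

/-- for a bialgebra `H`, the map `R(g ⊗ h) = Σ h₍₁₎g ⊗ h₍₂₎` is a solution
of the Hopf equation. -/
theorem takesakiMap_isHopfSolution : IsHopfSolution (takesakiMap k H) := by
  unfold IsHopfSolution
  apply TensorProduct.ext'
  intro g z
  induction z using TensorProduct.induction_on with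
  | zero => simp
  | add z₁ z₂ h1 h2 =>
    simp only [comp_apply, tmul_add, map_add] at h1 h2 ⊢
    rw [h1, h2]
  | tmul h l =>
    simp only [comp_apply]
    rw [hopf_lhs, hopf_rhs, Coalgebra.coassoc_apply]
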